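/- Let a, b, f, y ∈ ℝⁿ with ‖a‖₂ = 1, y ≠ 0, P_y(b) ≠ 0, P_y(f) ≠ 0, bᵀy = cᵀy, and suppose P_y(a)ᵀ( P_y(b)/‖P_y(b)‖₂ - P_y(f)/‖P_y(f)‖₂ ) ≤ 0. Then the minimum of rᵀf subject to aᵀ(b + r) ≤ 0, ‖r‖₂ ≤ ‖b‖₂, and (c + r)ᵀy = 0 equals -‖P_y(b)‖₂‖P_y(f)‖₂ + P_y(b)ᵀP_y(f) - fᵀb, and is attained with the ball constraint active and the halfspace constraint inactive (Lagrange multipliers α = 0 and β = ‖P_y(f)‖₂/‖P_y(b)‖₂ > 0). -/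

import Mathlib

open RealInnerProductSpace

set_option maxHeartbeats 1000000

variable {E : Type*} [NormedAddCommGroup E] [InnerProductSpace ℝ E]

lemma proj_inner_aux (y u v : E) (hy : y ≠ 0) :
    ⟪u - (⟪u, y⟫ / ‖y‖^2) • y, v - (⟪v, y⟫ / ‖y‖^2) • y⟫
      = ⟪u, v⟫ - ⟪u, y⟫ * ⟪v, y⟫ / ‖y‖^2 := by
  have hY : ⟪y, y⟫ = ‖y‖^2 := real_inner_self_eq_norm_sq y
  have h0 : (‖y‖:ℝ)^2 ≠ 0 := pow_ne_zero _ (norm_ne_zero_iff.mpr hy)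
  simp only [inner_sub_left, inner_sub_right, real_inner_smul_left, real_inner_smul_right, hY,
    real_inner_comm y u, real_inner_comm y v]
  field_simp
  ring

lemma proj_orth_aux (y u : E) (hy : y ≠ 0) :
    ⟪u - (⟪u, y⟫ / ‖y‖^2) • y, y⟫ = 0 := by
  have hY : ⟪y, y⟫ = ‖y‖^2 := real_inner_self_eq_norm_sq y
  have h0 : (‖y‖:ℝ)^2 ≠ 0 := pow_ne_zero _ (norm_ne_zero_iff.mpr hy)
  rw [inner_sub_left, real_inner_smul_left, hY, div_mul_cancel₀ _ h0, sub_self]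

lemma scalar_aux (u v X Z : ℝ) (hu : 0 < u) (hv : 0 < v) (h : u⁻¹ * X - v⁻¹ * Z ≤ 0) :
    X - u / v * Z ≤ 0 := by
  have h2 := mul_le_mul_of_nonneg_left (by linarith : u⁻¹ * X ≤ v⁻¹ * Z) hu.le
  rw [mul_inv_cancel_left₀ hu.ne'] at h2
  have h3 : u * (v⁻¹ * Z) = u / v * Z := by rw [div_eq_mul_inv]; ring
  linarith [h3 ▸ h2]

theorem stmt_aux (a b c f y : E)
    (ha : ‖a‖ = 1) (hy : y ≠ 0) (hcy : ⟪b, y⟫ = ⟪c, y⟫)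
    (hPb : b - (⟪b, y⟫ / ‖y‖^2) • y ≠ 0) (hPf : f - (⟪f, y⟫ / ‖y‖^2) • y ≠ 0)
    (hcond : ⟪a - (⟪a, y⟫ / ‖y‖^2) • y,
        ‖b - (⟪b, y⟫ / ‖y‖^2) • y‖⁻¹ • (b - (⟪b, y⟫ / ‖y‖^2) • y) -
        ‖f - (⟪f, y⟫ / ‖y‖^2) • y‖⁻¹ • (f - (⟪f, y⟫ / ‖y‖^2) • y)⟫ ≤ 0)
    (hne : {r : E | ⟪a, b + r⟫ ≤ 0 ∧ ‖r‖ ≤ ‖b‖ ∧ ⟪c + r, y⟫ = 0}.Nonempty) :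
    IsLeast ((fun r => ⟪r, f⟫) ''
      {r : E | ⟪a, b + r⟫ ≤ 0 ∧ ‖r‖ ≤ ‖b‖ ∧ ⟪c + r, y⟫ = 0})
      (-(‖b - (⟪b, y⟫ / ‖y‖^2) • y‖ * ‖f - (⟪f, y⟫ / ‖y‖^2) • y‖) +
        ⟪b - (⟪b, y⟫ / ‖y‖^2) • y, f - (⟪f, y⟫ / ‖y‖^2) • y⟫ - ⟪f, b⟫) ∧
    (∃ r : E,
      (⟪a, b + r⟫ ≤ 0 ∧ ‖r‖ ≤ ‖b‖ ∧ ⟪c + r, y⟫ = 0) ∧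
      ⟪r, f⟫ = -(‖b - (⟪b, y⟫ / ‖y‖^2) • y‖ * ‖f - (⟪f, y⟫ / ‖y‖^2) • y‖) +
        ⟪b - (⟪b, y⟫ / ‖y‖^2) • y, f - (⟪f, y⟫ / ‖y‖^2) • y⟫ - ⟪f, b⟫ ∧
      ‖r‖ = ‖b‖ ∧
      ∃ ρ : ℝ, f + (‖f - (⟪f, y⟫ / ‖y‖^2) • y‖ / ‖b - (⟪b, y⟫ / ‖y‖^2) • y‖) • r
          + ρ • y = 0) ∧
    0 < ‖f - (⟪f, y⟫ / ‖y‖^2) • y‖ / ‖b - (⟪b, y⟫ / ‖y‖^2) • y‖ := by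
  have hY : ⟪y, y⟫ = ‖y‖^2 := real_inner_self_eq_norm_sq y
  have hY0 : (‖y‖:ℝ)^2 ≠ 0 := pow_ne_zero _ (norm_ne_zero_iff.mpr hy)
  set pb := b - (⟪b, y⟫ / ‖y‖^2) • y with hpb_def
  set pf := f - (⟪f, y⟫ / ‖y‖^2) • y with hpf_def
  have hpbpos : (0:ℝ) < ‖pb‖ := norm_pos_iff.mpr hPb
  have hpfpos : (0:ℝ) < ‖pf‖ := norm_pos_iff.mpr hPf
  have hβpos : (0:ℝ) < ‖pf‖ / ‖pb‖ := div_pos hpfpos hpbpos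
  have hbf : ⟪pb, pf⟫ = ⟪b, f⟫ - ⟪b, y⟫ * ⟪f, y⟫ / ‖y‖^2 := proj_inner_aux y b f hy
  have hpfnorm : ⟪pf, pf⟫ = ‖pf‖^2 := real_inner_self_eq_norm_sq pf
  have hpbnorm : ⟪pb, pb⟫ = ‖pb‖^2 := real_inner_self_eq_norm_sq pb
  have hbb : (‖pb‖:ℝ)^2 = ⟪b, b⟫ - ⟪b, y⟫ * ⟪b, y⟫ / ‖y‖^2 := by
    rw [← hpbnorm]; exact proj_inner_aux y b b hy
  have hpby : ⟪pb, y⟫ = 0 := proj_orth_aux y b hy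
  have hpfy : ⟪pf, y⟫ = 0 := proj_orth_aux y f hy
  -- the optimal point
  set r₀ : E := pb - (‖pb‖ / ‖pf‖) • pf - b with hr₀
  have hby₀ : b + r₀ = pb - (‖pb‖ / ‖pf‖) • pf := by rw [hr₀]; abel
  -- feasibility
  have hfeas1 : ⟪a, b + r₀⟫ ≤ 0 := by
    have hapb : ⟪a - (⟪a, y⟫ / ‖y‖^2) • y, pb⟫ = ⟪a, pb⟫ := by
      rw [inner_sub_left, real_inner_smul_left, real_inner_comm pb y, hpby]; ring
    have hapf : ⟪a - (⟪a, y⟫ / ‖y‖^2) • y, pf⟫ = ⟪a, pf⟫ := by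
      rw [inner_sub_left, real_inner_smul_left, real_inner_comm pf y, hpfy]; ring
    rw [hby₀, inner_sub_right, real_inner_smul_right, ← hapb, ← hapf]
    rw [inner_sub_right, real_inner_smul_right, real_inner_smul_right] at hcond
    exact scalar_aux _ _ _ _ hpbpos hpfpos hcond
  have hr₀y : ⟪r₀, y⟫ = -⟪b, y⟫ := by
    rw [hr₀, inner_sub_left, inner_sub_left, real_inner_smul_left, hpby, hpfy]
    ring
  have hfeas3 : ⟪c + r₀, y⟫ = 0 := by
    rw [inner_add_left, hr₀y, ← hcy]; ring
  have hnormr₀sq : (‖r₀‖:ℝ)^2 = ‖b‖^2 := by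
    have hsplit : r₀ = -((⟪b, y⟫ / ‖y‖^2) • y) - (‖pb‖ / ‖pf‖) • pf := by
      rw [hr₀, hpb_def]; abel
    rw [← real_inner_self_eq_norm_sq, ← real_inner_self_eq_norm_sq, hsplit]
    simp only [inner_sub_left, inner_sub_right, inner_neg_left, inner_neg_right,
      real_inner_smul_left, real_inner_smul_right, hY, hpfy, real_inner_comm pf y, hpfnorm]
    have hbb2 : ⟪b, b⟫ = ‖pb‖^2 + ⟪b, y⟫ * ⟪b, y⟫ / ‖y‖^2 := by rw [hbb]; ring
    rw [hbb2]
    field_simp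
    ring
  have hfeas2 : ‖r₀‖ = ‖b‖ := by
    nlinarith [norm_nonneg r₀, norm_nonneg b, hnormr₀sq]
  -- objective value at r₀
  have hpbf : ⟪pb, f⟫ = ⟪pb, pf⟫ := by
    rw [hpf_def, inner_sub_right, real_inner_smul_right, hpby]; ring
  have hpff : ⟪pf, f⟫ = ‖pf‖^2 := by
    rw [← hpfnorm]
    conv_rhs => rw [hpf_def]
    rw [inner_sub_right, real_inner_smul_right, hpfy]; ring
  have hobj : ⟪r₀, f⟫ = -(‖pb‖ * ‖pf‖) + ⟪pb, pf⟫ - ⟪f, b⟫ := by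
    rw [hr₀, inner_sub_left, inner_sub_left, real_inner_smul_left, hpbf, hpff,
      real_inner_comm f b]
    have h5 : ‖pb‖ / ‖pf‖ * ‖pf‖^2 = ‖pb‖ * ‖pf‖ := by
      rw [sq, ← mul_assoc, div_mul_cancel₀ _ hpfpos.ne']
    rw [h5]; ring
  -- stationarity
  have hstat : ∃ ρ : ℝ, f + (‖pf‖ / ‖pb‖) • r₀ + ρ • y = 0 := by
    refine ⟨(‖pf‖ / ‖pb‖) * ⟪b, y⟫ / ‖y‖^2 - ⟪f, y⟫ / ‖y‖^2, ?_⟩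
    have hββ : ‖pf‖ / ‖pb‖ * (‖pb‖ / ‖pf‖) = 1 := by
      field_simp
    rw [hr₀, smul_sub, smul_sub, smul_smul, hββ, one_smul, hpb_def, hpf_def]
    match_scalars <;> field_simp <;> ring
  -- lower bound
  have hlb : ∀ x ∈ ((fun r => ⟪r, f⟫) ''
      {r : E | ⟪a, b + r⟫ ≤ 0 ∧ ‖r‖ ≤ ‖b‖ ∧ ⟪c + r, y⟫ = 0}),
      -(‖pb‖ * ‖pf‖) + ⟪pb, pf⟫ - ⟪f, b⟫ ≤ x := by
    rintro x ⟨r, ⟨-, hr2, hr3⟩, rfl⟩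
    have hrY : ⟪r, y⟫ = -⟪b, y⟫ := by
      rw [inner_add_left] at hr3; rw [hcy]; linarith
    set pr := r - (⟪r, y⟫ / ‖y‖^2) • y with hpr_def
    have hrf : ⟪pr, pf⟫ = ⟪r, f⟫ + ⟪b, y⟫ * ⟪f, y⟫ / ‖y‖^2 := by
      rw [proj_inner_aux y r f hy, hrY]; ring
    have hprn : (‖pr‖:ℝ)^2 = ‖r‖^2 - ⟪b, y⟫ * ⟪b, y⟫ / ‖y‖^2 := by
      rw [← real_inner_self_eq_norm_sq, proj_inner_aux y r r hy, hrY,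
        real_inner_self_eq_norm_sq]
      ring
    have hprsq : (‖pr‖:ℝ)^2 ≤ ‖pb‖^2 := by
      rw [hprn, hbb, real_inner_self_eq_norm_sq]
      nlinarith [norm_nonneg r, norm_nonneg b]
    have hprle : ‖pr‖ ≤ ‖pb‖ := by
      nlinarith [norm_nonneg pr, norm_nonneg pb]
    have hcs : -(‖pr‖ * ‖pf‖) ≤ ⟪pr, pf⟫ := by
      have h1 := abs_real_inner_le_norm pr pf
      have h2 := neg_abs_le (⟪pr, pf⟫ : ℝ)
      linarith
    have hmul : ‖pr‖ * ‖pf‖ ≤ ‖pb‖ * ‖pf‖ :=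
      mul_le_mul_of_nonneg_right hprle hpfpos.le
    show -(‖pb‖ * ‖pf‖) + ⟪pb, pf⟫ - ⟪f, b⟫ ≤ ⟪r, f⟫
    rw [real_inner_comm b f, hbf]
    linarith
  refine ⟨⟨⟨r₀, ⟨hfeas1, hfeas2.le, hfeas3⟩, hobj⟩, hlb⟩,
    ⟨r₀, ⟨hfeas1, hfeas2.le, hfeas3⟩, hobj, hfeas2, hstat⟩, hβpos⟩


/-- If `P_y(a)ᵀ(P_y(b)/‖P_y(b)‖ - P_y(f)/‖P_y(f)‖) ≤ 0`, then the minimum of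
`rᵀf` subject to `aᵀ(b+r) ≤ 0`, `‖r‖ ≤ ‖b‖`, `(c+r)ᵀy = 0` equals
`-‖P_y(b)‖₂‖P_y(f)‖₂ + P_y(b)ᵀP_y(f) - fᵀb`, attained with the ball constraint
active and stationarity holding with multipliers `α = 0`,
`β = ‖P_y(f)‖₂/‖P_y(b)‖₂ > 0`. -/
theorem stmt_15 {n : ℕ} (a b c f y : EuclideanSpace ℝ (Fin n))
    (ha : ‖a‖ = 1) (hy : y ≠ 0) (hcy : ⟪b, y⟫ = ⟪c, y⟫)
    (hPb : b - (⟪b, y⟫ / ‖y‖^2) • y ≠ 0) (hPf : f - (⟪f, y⟫ / ‖y‖^2) • y ≠ 0)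
    (hcond : ⟪a - (⟪a, y⟫ / ‖y‖^2) • y,
        ‖b - (⟪b, y⟫ / ‖y‖^2) • y‖⁻¹ • (b - (⟪b, y⟫ / ‖y‖^2) • y) -
        ‖f - (⟪f, y⟫ / ‖y‖^2) • y‖⁻¹ • (f - (⟪f, y⟫ / ‖y‖^2) • y)⟫ ≤ 0)
    (hne : {r : EuclideanSpace ℝ (Fin n) |
        ⟪a, b + r⟫ ≤ 0 ∧ ‖r‖ ≤ ‖b‖ ∧ ⟪c + r, y⟫ = 0}.Nonempty) :
    IsLeast ((fun r => ⟪r, f⟫) ''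
      {r : EuclideanSpace ℝ (Fin n) |
        ⟪a, b + r⟫ ≤ 0 ∧ ‖r‖ ≤ ‖b‖ ∧ ⟪c + r, y⟫ = 0})
      (-(‖b - (⟪b, y⟫ / ‖y‖^2) • y‖ * ‖f - (⟪f, y⟫ / ‖y‖^2) • y‖) +
        ⟪b - (⟪b, y⟫ / ‖y‖^2) • y, f - (⟪f, y⟫ / ‖y‖^2) • y⟫ - ⟪f, b⟫) ∧
    (∃ r : EuclideanSpace ℝ (Fin n),
      (⟪a, b + r⟫ ≤ 0 ∧ ‖r‖ ≤ ‖b‖ ∧ ⟪c + r, y⟫ = 0) ∧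
      ⟪r, f⟫ = -(‖b - (⟪b, y⟫ / ‖y‖^2) • y‖ * ‖f - (⟪f, y⟫ / ‖y‖^2) • y‖) +
        ⟪b - (⟪b, y⟫ / ‖y‖^2) • y, f - (⟪f, y⟫ / ‖y‖^2) • y⟫ - ⟪f, b⟫ ∧
      ‖r‖ = ‖b‖ ∧
      ∃ ρ : ℝ, f + (‖f - (⟪f, y⟫ / ‖y‖^2) • y‖ / ‖b - (⟪b, y⟫ / ‖y‖^2) • y‖) • r
          + ρ • y = 0) ∧
    0 < ‖f - (⟪f, y⟫ / ‖y‖^2) • y‖ / ‖b - (⟪b, y⟫ / ‖y‖^2) • y‖ :=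
  stmt_aux a b c f y ha hy hcy hPb hPf hcond hne
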